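/- Suppose R̂ = (q + q^{-1}) P_s - q^{-1} Id + c K and R̂' = (q + q^{-1}) P_s - q Id + c' K, where P_s is an idempotent with P_s K = K P_s = 0, K² = κ K with κ = b̃^q(a) = -[d]_q(q^{d+1}+q^{-d-1}), c = -(q - q^{-1})(1 + q^{2d+2})^{-1}, and c' = (q - q^{-1})(1 + q^{-2d-2})^{-1}. Then R̂' = R̂^{-1}, i.e., R̂ R̂' = R̂' R̂ = Id. -/

import Mathlib

/-- With P_s idempotent, P_s K = K P_s = 0, K² = κK with
κ = -[d]_q(q^{d+1}+q^{-d-1}),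
R̂ = (q+q⁻¹)P_s - q⁻¹ Id - (q-q⁻¹)(1+q^{2d+2})⁻¹ K and
R̂' = (q+q⁻¹)P_s - q Id + (q-q⁻¹)(1+q^{-2d-2})⁻¹ K,
one has R̂ R̂' = R̂' R̂ = Id, i.e. R̂' = R̂⁻¹. -/
theorem stmt10 (K : Type*) [Field K] [CharZero K]
    (V : Type*) [AddCommGroup V] [Module K V]
    (q : K) (hq0 : q ≠ 0) (hqru : ∀ k : ℕ, k ≠ 0 → q ^ k ≠ 1)
    (d : ℤ) (hd : (1 : K) + q ^ (2 * d + 2) ≠ 0)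
    (κ : K) (hκ : κ = -((q ^ d - q ^ (-d)) / (q - q⁻¹)) * (q ^ (d + 1) + q ^ (-(d + 1))))
    (Ps Kop : Module.End K V)
    (hPs : Ps * Ps = Ps) (hPK : Ps * Kop = 0) (hKP : Kop * Ps = 0)
    (hK2 : Kop * Kop = κ • Kop)
    (Rh Rh' : Module.End K V)
    (hRh : Rh = (q + q⁻¹) • Ps - q⁻¹ • (1 : Module.End K V)
        + (-(q - q⁻¹) * ((1 : K) + q ^ (2 * d + 2))⁻¹) • Kop)
    (hRh' : Rh' = (q + q⁻¹) • Ps - q • (1 : Module.End K V)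
        + ((q - q⁻¹) * ((1 : K) + q ^ (-(2 * d + 2)))⁻¹) • Kop) :
    Rh * Rh' = 1 ∧ Rh' * Rh = 1 := by
  have ht0 : q ^ d ≠ 0 := zpow_ne_zero d hq0
  have hqq : q - q⁻¹ ≠ 0 := by
    intro h
    apply hqru 2 (by norm_num)
    have h' : (q - q⁻¹) * q = 0 := by rw [h, zero_mul]
    rw [sub_mul, inv_mul_cancel₀ hq0, sub_eq_zero] at h'
    rw [pow_two, h']
  have h1 : q ^ (2 * d + 2) = q ^ d * q ^ d * q * q := by
    rw [show 2 * d + 2 = d + d + 1 + 1 by ring, zpow_add₀ hq0, zpow_add₀ hq0,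
      zpow_add₀ hq0, zpow_one]
  have hx : q ^ d * q ^ d * q * q ≠ 0 := by
    exact mul_ne_zero (mul_ne_zero (mul_ne_zero ht0 ht0) hq0) hq0
  have h2 : q ^ (-(2 * d + 2)) = (q ^ d * q ^ d * q * q)⁻¹ := by
    rw [zpow_neg, h1]
  have h3 : q ^ (-d) = (q ^ d)⁻¹ := by rw [zpow_neg]
  have h4 : q ^ (d + 1) = q ^ d * q := by rw [zpow_add₀ hq0, zpow_one]
  have h5 : q ^ (-(d + 1)) = (q ^ d * q)⁻¹ := by rw [zpow_neg, h4]
  have hd1 : (1 : K) + q ^ d * q ^ d * q * q ≠ 0 := by rwa [h1] at hd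
  have hd2 : (1 : K) + (q ^ d * q ^ d * q * q)⁻¹ ≠ 0 := by
    intro h
    apply hd1
    have := congrArg (· * (q ^ d * q ^ d * q * q)) h
    simp only [add_mul, one_mul, inv_mul_cancel₀ hx, zero_mul] at this
    linear_combination this
  set c : K := -(q - q⁻¹) * ((1 : K) + q ^ (2 * d + 2))⁻¹ with hc
  set c' : K := (q - q⁻¹) * ((1 : K) + q ^ (-(2 * d + 2)))⁻¹ with hc'
  have hq21 : q * q - 1 ≠ 0 := by
    intro h
    apply hqru 2 (by norm_num)
    rw [pow_two, sub_eq_zero] at *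
    exact h
  have hκ2 : κ = -(q ^ d * q ^ d - 1) * (1 + q ^ d * q ^ d * q * q) /
      (q ^ d * q ^ d * (q * q - 1)) := by
    rw [hκ, h3, h4, h5]
    rw [eq_div_iff (mul_ne_zero (mul_ne_zero ht0 ht0) hq21)]
    have hq21' : q ^ 2 - 1 ≠ 0 := by rwa [pow_two]
    have hq21'' : -1 + q ^ 2 ≠ 0 := by rwa [neg_add_eq_sub]
    field_simp [hqq, hq0, ht0]
    ring
  have hkey : c * c' * κ - q⁻¹ * c' - q * c = 0 := by
    have hinv : ((1 : K) + (q ^ d * q ^ d * q * q)⁻¹)⁻¹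
        = (q ^ d * q ^ d * q * q) * ((1 : K) + q ^ d * q ^ d * q * q)⁻¹ := by
      refine inv_eq_of_mul_eq_one_right ?_
      have hd1' : 1 + (q ^ d) ^ 2 * q ^ 2 ≠ 0 := by
        rw [pow_two, pow_two]; convert hd1 using 1; ring
      field_simp
      ring
    have hN : q - q⁻¹ = (q * q - 1) / q := by field_simp
    rw [hc, hc', hκ2, h1, h2, hinv, hN]
    obtain ⟨M, hM⟩ : ∃ M, q * q - 1 = M := ⟨_, rfl⟩
    have hM0 : M ≠ 0 := hM ▸ hq21
    obtain ⟨D, hD⟩ : ∃ D, (1 : K) + q ^ d * q ^ d * q * q = D := ⟨_, rfl⟩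
    have hD0 : D ≠ 0 := hD ▸ hd1
    rw [hM, hD]
    field_simp
    ring
  have hPs1 : Ps * (1 : Module.End K V) = Ps := mul_one Ps
  have h1Ps : (1 : Module.End K V) * Ps = Ps := one_mul Ps
  have key : ∀ x y u v : K,
      ((q + q⁻¹) • Ps + x • (1 : Module.End K V) + y • Kop) *
        ((q + q⁻¹) • Ps + u • (1 : Module.End K V) + v • Kop)
      = ((q + q⁻¹) * (q + q⁻¹) + (q + q⁻¹) * u + x * (q + q⁻¹)) • Ps
        + (x * u) • (1 : Module.End K V) + (x * v + y * u + y * v * κ) • Kop := by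
    intro x y u v
    simp only [mul_add, add_mul, smul_mul_smul_comm, hPs, hPK, hKP, hK2, mul_one, one_mul,
      smul_zero, smul_smul]
    module
  have e1 : Rh = (q + q⁻¹) • Ps + (-q⁻¹) • (1 : Module.End K V) + c • Kop := by
    rw [hRh, sub_eq_add_neg, neg_smul]
  have e2 : Rh' = (q + q⁻¹) • Ps + (-q) • (1 : Module.End K V) + c' • Kop := by
    rw [hRh', sub_eq_add_neg, neg_smul]
  constructor
  · rw [e1, e2, key]
    rw [show (q + q⁻¹) * (q + q⁻¹) + (q + q⁻¹) * (-q) + (-q⁻¹) * (q + q⁻¹) = 0 by ring,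
      show (-q⁻¹) * (-q) = 1 by field_simp,
      show (-q⁻¹) * c' + c * (-q) + c * c' * κ = 0 by linear_combination hkey]
    simp
  · rw [e1, e2, key]
    rw [show (q + q⁻¹) * (q + q⁻¹) + (q + q⁻¹) * (-q⁻¹) + (-q) * (q + q⁻¹) = 0 by ring,
      show (-q) * (-q⁻¹) = 1 by field_simp,
      show (-q) * c + c' * (-q⁻¹) + c' * c * κ = 0 by linear_combination hkey]
    simp
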